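/- For n ≥ 1 and 0 ≤ k ≤ n/2, the number of partitions of k fitting in an a × b rectangle minus the number of partitions of k−1 fitting in the same rectangle is nonnegative whenever k ≤ ab/2; i.e., the coefficients of the Gaussian binomial coefficient binom(a+b, a)_q are unimodal. -/

import Mathlib

namespace OPAC

noncomputable section

open Equiv Finset

/-! ### Partitions: basic access -/

/-- The parts of a partition, sorted in weakly decreasing order. -/
def sortedParts {n : ℕ} (l : n.Partition) : List ℕ := Multiset.sort l.parts (· ≥ ·)

/-- `partK l i` is the `(i+1)`-st largest part `λ_{i+1}` of `l` (0-indexed), or `0`. -/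
def partK {n : ℕ} (l : n.Partition) (i : ℕ) : ℕ := (sortedParts l).getD i 0

/-- The number of (positive) parts `ℓ(λ)`. -/
def numParts {n : ℕ} (l : n.Partition) : ℕ := Multiset.card l.parts

lemma sum_sortedParts {n : ℕ} (l : n.Partition) : (sortedParts l).sum = n := by
  rw [← Multiset.sum_coe, sortedParts, Multiset.sort_eq, l.parts_sum]

lemma sum_range_getD (L : List ℕ) : ∀ (m : ℕ), L.length ≤ m →
    ∑ i ∈ Finset.range m, L.getD i 0 = L.sum := by
  induction L with
  | nil => intro m _; simp
  | cons a L ih =>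
    intro m hm
    cases m with
    | zero => simp at hm
    | succ m =>
      rw [Finset.sum_range_succ']
      simp only [List.getD_cons_succ, List.getD_cons_zero]
      rw [ih m (by simpa using hm), List.sum_cons]
      omega

/-! ### Constructions of partitions -/

/-- `extendP l N h` is the padded partition `l[N] = (N - |l|, l₁, l₂, …)`. -/
def extendP {a : ℕ} (l : a.Partition) (N : ℕ) (h : a ≤ N) : N.Partition :=
  Nat.Partition.ofSums N ((N - a) ::ₘ l.parts)
    (by rw [Multiset.sum_cons, l.parts_sum]; omega)

/-- Coordinatewise sum `λ + μ` of two partitions. -/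
def padd {a b : ℕ} (l : a.Partition) (m : b.Partition) : (a + b).Partition :=
  Nat.Partition.ofSums _
    (↑(List.ofFn (fun i : Fin (max (sortedParts l).length (sortedParts m).length) =>
        (sortedParts l).getD i 0 + (sortedParts m).getD i 0)))
    (by
      rw [Multiset.sum_coe, List.sum_ofFn, Finset.sum_add_distrib]
      have h1 : ∑ x : Fin (max (sortedParts l).length (sortedParts m).length),
          (sortedParts l).getD (x : ℕ) 0
          = ∑ i ∈ Finset.range (max (sortedParts l).length (sortedParts m).length),
            (sortedParts l).getD i 0 :=
        Fin.sum_univ_eq_sum_range (fun i : ℕ => (sortedParts l).getD i 0) _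
      have h2 : ∑ x : Fin (max (sortedParts l).length (sortedParts m).length),
          (sortedParts m).getD (x : ℕ) 0
          = ∑ i ∈ Finset.range (max (sortedParts l).length (sortedParts m).length),
            (sortedParts m).getD i 0 :=
        Fin.sum_univ_eq_sum_range (fun i : ℕ => (sortedParts m).getD i 0) _
      rw [h1, h2, sum_range_getD _ _ (le_max_left _ _), sum_range_getD _ _ (le_max_right _ _),
        sum_sortedParts, sum_sortedParts])

/-- Add `c` to each of the `ℓ(l)` parts of `l`, i.e. the partition `c^{ℓ(l)} + l`. -/
def addToEach {a : ℕ} (c : ℕ) (l : a.Partition) : (a + numParts l * c).Partition :=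
  Nat.Partition.ofSums _ (l.parts.map (fun x => x + c))
    (by
      have h : (l.parts.map (fun x => id x + (fun _ : ℕ => c) x)).sum
          = (l.parts.map id).sum + (l.parts.map (fun _ => c)).sum := Multiset.sum_map_add
      simp only [id] at h
      rw [h, Multiset.map_id', Multiset.map_const', Multiset.sum_replicate, l.parts_sum,
        smul_eq_mul, numParts])

/-- The partition `(c^k, ν)`: `k` parts equal to `c` followed by the parts of `v`. -/
def repCat {m : ℕ} (k c : ℕ) (v : m.Partition) : (k * c + m).Partition :=
  Nat.Partition.ofSums _ (Multiset.replicate k c + v.parts)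
    (by rw [Multiset.sum_add, Multiset.sum_replicate, v.parts_sum, smul_eq_mul])

/-- Scale each part of `l` by `N`. -/
def scaleP (N : ℕ) {a : ℕ} (l : a.Partition) : (N * a).Partition :=
  Nat.Partition.ofSums _ (l.parts.map (fun x => N * x))
    (by
      have h := Multiset.sum_map_mul_left (a := N) (s := l.parts) (f := id)
      simp only [id] at h
      rw [h, Multiset.map_id', l.parts_sum])

/-- The rectangular partition `(c^r)`. -/
def rectP (c r : ℕ) : (r * c).Partition :=
  Nat.Partition.ofSums _ (Multiset.replicate r c)
    (by rw [Multiset.sum_replicate, smul_eq_mul])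

/-- The one-column partition `(1^n)`. -/
def oneColumn (n : ℕ) : n.Partition :=
  Nat.Partition.ofSums n (Multiset.replicate n 1)
    (by rw [Multiset.sum_replicate, smul_eq_mul, mul_one])

/-- The two-row partition `(a - k, k)` of `a`. -/
def twoRowP (a k : ℕ) (h : k ≤ a) : a.Partition :=
  extendP (Nat.Partition.indiscrete k) a h

/-! ### Conjugate partition -/

lemma sum_ite_lt (a : ℕ) : ∀ (n : ℕ), a ≤ n →
    (∑ j ∈ Finset.range n, if j < a then (1 : ℕ) else 0) = a := by
  intro n
  induction n with
  | zero => intro h; interval_cases a; simp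
  | succ n ih =>
    intro h
    rw [Finset.sum_range_succ]
    rcases Nat.lt_or_ge n a with h1 | h1
    · rw [Finset.sum_congr rfl fun j hj =>
        if_pos (lt_trans (Finset.mem_range.mp hj) h1), if_pos h1]
      simp only [Finset.sum_const, Finset.card_range, smul_eq_mul, mul_one]
      omega
    · rw [ih h1, if_neg (Nat.not_lt.mpr h1)]
      omega

lemma sum_colCounts (n : ℕ) : ∀ (s : Multiset ℕ), (∀ p ∈ s, p ≤ n) →
    (((Multiset.range n).map fun j => Multiset.card (s.filter (fun p => j < p))).sum = s.sum) := by
  intro s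
  induction s using Multiset.induction_on with
  | empty => intro _; simp
  | cons a s ih =>
    intro hs
    have ha : a ≤ n := hs a (Multiset.mem_cons_self a s)
    have hrec := ih (fun p hp => hs p (Multiset.mem_cons_of_mem hp))
    have hcong : (Multiset.range n).map (fun j => Multiset.card ((a ::ₘ s).filter (fun p => j < p)))
        = (Multiset.range n).map (fun j =>
            (if j < a then 1 else 0) + Multiset.card (s.filter (fun p => j < p))) := by
      apply Multiset.map_congr rfl
      intro j _
      rw [Multiset.filter_cons]
      split <;> simp [add_comm]
    rw [hcong, Multiset.sum_map_add, hrec, Multiset.sum_cons]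
    have : ((Multiset.range n).map fun j => if j < a then (1:ℕ) else 0).sum = a := by
      rw [← Finset.range_val, ← Finset.sum_eq_multiset_sum]
      exact sum_ite_lt a n ha
    omega

/-- The conjugate (transpose) partition. -/
def conj {n : ℕ} (l : n.Partition) : n.Partition :=
  Nat.Partition.ofSums n
    ((Multiset.range n).map fun j => Multiset.card (l.parts.filter (fun p => j < p)))
    (by
      rw [sum_colCounts n l.parts fun p hp => ?_, l.parts_sum]
      have h1 : p ≤ l.parts.sum :=
        Multiset.single_le_sum (fun _ _ => Nat.zero_le _) p hp
      rwa [l.parts_sum] at h1)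

/-! ### Irreducible characters of the symmetric group, via the Frobenius character formula -/

/-- The Vandermonde product `∏_{i<j} (x_i - x_j)`. -/
def vandermonde (n : ℕ) : MvPolynomial (Fin n) ℤ :=
  ∏ p ∈ Finset.univ.filter (fun p : Fin n × Fin n => p.1 < p.2),
    (MvPolynomial.X p.1 - MvPolynomial.X p.2)

/-- The power sum `p_k = ∑ x_i^k` in `n` variables. -/
def powerSum (n k : ℕ) : MvPolynomial (Fin n) ℤ := ∑ i : Fin n, MvPolynomial.X i ^ k

/-- The power sum symmetric polynomial `p_α` where `α` is the (full) cycle type of `w`,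
including fixed points as parts equal to `1`. -/
def powerSumCycleType (n : ℕ) (w : Equiv.Perm (Fin n)) : MvPolynomial (Fin n) ℤ :=
  (w.cycleType.map (powerSum n)).prod * (powerSum n 1) ^ (n - w.cycleType.sum)

/-- The exponent vector `λ + δ = (λ₁ + n - 1, λ₂ + n - 2, …, λ_n)`. -/
def staircaseExp {n : ℕ} (l : n.Partition) : Fin n →₀ ℕ :=
  Finsupp.equivFunOnFinite.symm (fun i => partK l i + (n - 1 - (i : ℕ)))

/-- The irreducible character `χ^λ(w)` of the symmetric group `S_n`, computed by the
Frobenius character formula: `χ^λ(α)` is the coefficient of `x^{λ+δ}` in `a_δ · p_α`. -/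
def chi {n : ℕ} (l : n.Partition) (w : Equiv.Perm (Fin n)) : ℤ :=
  MvPolynomial.coeff (staircaseExp l) (vandermonde n * powerSumCycleType n w)

/-- The Kronecker coefficient `g(λ,μ,ν) = (1/n!) ∑_{w ∈ S_n} χ^λ(w) χ^μ(w) χ^ν(w)`. -/
def kron {n : ℕ} (l m v : n.Partition) : ℚ :=
  (n.factorial : ℚ)⁻¹ *
    ∑ w : Equiv.Perm (Fin n), (chi l w : ℚ) * (chi m w : ℚ) * (chi v w : ℚ)

/-- The full cycle type of a permutation, including fixed points as cycles of length 1. -/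
def fullCycleType {n : ℕ} (w : Equiv.Perm (Fin n)) : Multiset ℕ :=
  w.cycleType + Multiset.replicate (n - w.cycleType.sum) 1

/-- The Littlewood–Richardson coefficient `c^λ_{μν} = ⟨Res_{S_a × S_b} χ^λ, χ^μ × χ^ν⟩`. -/
def lrChar {a b : ℕ} (l : (a + b).Partition) (m : a.Partition) (v : b.Partition) : ℚ :=
  ((a.factorial * b.factorial : ℕ) : ℚ)⁻¹ *
    ∑ u : Equiv.Perm (Fin a), ∑ w : Equiv.Perm (Fin b),
      (chi m u : ℚ) * (chi v w : ℚ) *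
        (chi l (finSumFinEquiv.permCongr (Equiv.Perm.sumCongr u w)) : ℚ)

/-! ### Young diagrams, tableaux and Schur functions -/

/-- The Young diagram of a partition. -/
def shape {n : ℕ} (l : n.Partition) : YoungDiagram :=
  YoungDiagram.ofRowLens (sortedParts l) (List.Pairwise.sortedGE (Multiset.pairwise_sort _ _))

/-- Semistandard Young tableaux of shape `l` and weight `d`:
for every `k`, exactly `d k` cells have entry `k`. -/
def ssytWeighted {n : ℕ} (l : n.Partition) (d : ℕ → ℕ) :
    Set (SemistandardYoungTableau (shape l)) :=
  {T | ∀ k : ℕ, (((shape l).cells.filter (fun c => T c.1 c.2 = k)).card = d k)}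

/-- The coefficient of `x^d` in the Schur function `s_l`: the number of SSYT of
shape `l` and weight `d`. -/
def schurCoeff {n : ℕ} (l : n.Partition) (d : ℕ →₀ ℕ) : ℕ := (ssytWeighted l ⇑d).ncard

/-- The Schur function `s_l` in infinitely many variables `x_0, x_1, …`, as the
generating function of semistandard Young tableaux of shape `l`. -/
def schurSeries {n : ℕ} (l : n.Partition) : MvPowerSeries ℕ ℚ :=
  fun d => (schurCoeff l d : ℚ)

/-- The complete homogeneous symmetric function `h_m`: the sum of all monomials of degree `m`. -/
def hSeries (m : ℕ) : MvPowerSeries ℕ ℚ :=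
  fun d => if (d.sum fun _ k => k) = m then 1 else 0

/-- `h_m` for integer index, with `h_m = 0` for `m < 0`. -/
def hSeriesZ (m : ℤ) : MvPowerSeries ℕ ℚ := if m < 0 then 0 else hSeries m.toNat

/-- The complete homogeneous symmetric polynomial `h_m` in `N` variables. -/
def hPoly (N m : ℕ) : MvPolynomial (Fin N) ℚ :=
  ∑ s ∈ (Finset.univ : Finset (Fin N)).sym m, ((s : Sym (Fin N) m).1.map MvPolynomial.X).prod

/-- `h_m` in `N` variables for integer index, with `h_m = 0` for `m < 0`. -/
def hPolyZ (N : ℕ) (m : ℤ) : MvPolynomial (Fin N) ℚ := if m < 0 then 0 else hPoly N m.toNat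

/-- The Schur polynomial `s_l(x_1, …, x_N)` (via the Jacobi–Trudi determinant). -/
def schurPoly (N : ℕ) {n : ℕ} (l : n.Partition) : MvPolynomial (Fin N) ℚ :=
  (Matrix.of fun i j : Fin (numParts l) => hPolyZ N ((partK l i : ℤ) - (i : ℕ) + (j : ℕ))).det

/-! ### Partitions in a rectangle -/

/-- `pRect r a b` is the number of partitions of `r` fitting in an `a × b` box:
largest part at most `a` and at most `b` parts. -/
def pRect (r a b : ℕ) : ℕ :=
  ((Finset.univ : Finset (Nat.Partition r)).filter
    (fun l => (∀ p ∈ l.parts, p ≤ a) ∧ Multiset.card l.parts ≤ b)).card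

/-- `pRect` with integer index, zero for negative index. -/
def pZ (r : ℤ) (a b : ℕ) : ℕ := if 0 ≤ r then pRect r.toNat a b else 0

/-! ### Restrictions of exponents, for the Cauchy identity -/

/-- Restriction of an exponent on `ℕ ⊕ ℕ` to the first (`x`) block. -/
def xpart (e : (ℕ ⊕ ℕ) →₀ ℕ) : ℕ →₀ ℕ :=
  Finsupp.comapDomain Sum.inl e (Sum.inl_injective.injOn)

/-- Restriction of an exponent on `ℕ ⊕ ℕ` to the second (`y`) block. -/
def ypart (e : (ℕ ⊕ ℕ) →₀ ℕ) : ℕ →₀ ℕ :=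
  Finsupp.comapDomain Sum.inr e (Sum.inr_injective.injOn)

/-- The total degree of an exponent vector. -/
def degOf (d : ℕ →₀ ℕ) : ℕ := d.sum fun _ k => k

end

end OPAC

namespace U12
open Finset

noncomputable section

abbrev W : Type := Finset ℕ →₀ ℚ

def fco (n i : ℕ) : ℚ := (n : ℚ) - 1 - i
def eco (i : ℕ) : ℚ := i

def upS (i : ℕ) (S : Finset ℕ) : Finset ℕ := insert (i+1) (S.erase i)
def dnS (i : ℕ) (S : Finset ℕ) : Finset ℕ := insert (i-1) (S.erase i)

def ustep (n : ℕ) (S : Finset ℕ) : W :=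
  ∑ i ∈ S, if i + 1 ∈ S then 0 else fco n i • Finsupp.single (upS i S) 1

def dstep (S : Finset ℕ) : W :=
  ∑ i ∈ S, if i - 1 ∈ S then 0 else eco i • Finsupp.single (dnS i S) 1

def hstep (n : ℕ) (S : Finset ℕ) : W :=
  (∑ i ∈ S, ((n:ℚ) - 1 - 2*i)) • Finsupp.single S 1

def Uop (n : ℕ) : W →ₗ[ℚ] W := Finsupp.linearCombination ℚ (ustep n)
def Dop : W →ₗ[ℚ] W := Finsupp.linearCombination ℚ dstep
def Hop (n : ℕ) : W →ₗ[ℚ] W := Finsupp.linearCombination ℚ (hstep n)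

/-- expansion of `Dop (ustep n S)` -/
lemma Dop_ustep (n : ℕ) (S : Finset ℕ) :
    Dop (ustep n S) =
      (∑ i ∈ S, if i + 1 ∈ S then 0 else fco n i * eco (i+1)) • Finsupp.single S 1
      + ∑ i ∈ S, ∑ j ∈ S.erase i,
          (if i + 1 ∈ S then 0 else if j - 1 ∈ upS i S then 0 else
            (fco n i * eco j) • Finsupp.single (dnS j (upS i S)) 1) := by
  rw [ustep, map_sum]
  have key : ∀ i ∈ S, Dop (if i + 1 ∈ S then 0 else fco n i • Finsupp.single (upS i S) 1)
      = (if i + 1 ∈ S then 0 else fco n i * eco (i+1)) • Finsupp.single S 1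
        + ∑ j ∈ S.erase i, (if i + 1 ∈ S then 0 else if j - 1 ∈ upS i S then 0 else
            (fco n i * eco j) • Finsupp.single (dnS j (upS i S)) 1) := by
    intro i hi
    by_cases h1 : i + 1 ∈ S
    · simp [h1]
    · simp only [h1, if_false]
      rw [map_smul, Dop, Finsupp.linearCombination_single, one_smul]
      have hni : i + 1 ∉ S.erase i := fun h => h1 (Finset.mem_of_mem_erase h)
      rw [dstep, upS, Finset.sum_insert hni]
      have hmem : i ∉ insert (i+1) (S.erase i) := by
        simp [Finset.mem_insert, Finset.mem_erase]
      rw [show i + 1 - 1 = i from rfl]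
      simp only [eq_false hmem, if_false]
      have hset : dnS (i+1) (insert (i+1) (S.erase i)) = S := by
        rw [dnS, show i + 1 - 1 = i from rfl, Finset.erase_insert hni, Finset.insert_erase hi]
      rw [hset, smul_add, smul_smul, Finset.smul_sum]
      congr 1
      refine Finset.sum_congr rfl (fun j hj => ?_)
      by_cases h3 : j - 1 ∈ upS i S
      · rw [upS] at h3; simp [h3]
      · rw [upS] at h3; simp only [h3, if_false]
        rw [smul_smul]
  rw [Finset.sum_congr rfl key, Finset.sum_add_distrib, Finset.sum_smul]

/-- expansion of `Uop n (dstep S)` -/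
lemma Uop_dstep (n : ℕ) (S : Finset ℕ) :
    Uop n (dstep S) =
      (∑ j ∈ S, if j - 1 ∈ S then 0 else eco j * fco n (j-1)) • Finsupp.single S 1
      + ∑ j ∈ S, ∑ i ∈ S.erase j,
          (if j - 1 ∈ S then 0 else if i + 1 ∈ dnS j S then 0 else
            (eco j * fco n i) • Finsupp.single (upS i (dnS j S)) 1) := by
  rw [dstep, map_sum]
  have key : ∀ j ∈ S, Uop n (if j - 1 ∈ S then 0 else eco j • Finsupp.single (dnS j S) 1)
      = (if j - 1 ∈ S then 0 else eco j * fco n (j-1)) • Finsupp.single S 1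
        + ∑ i ∈ S.erase j, (if j - 1 ∈ S then 0 else if i + 1 ∈ dnS j S then 0 else
            (eco j * fco n i) • Finsupp.single (upS i (dnS j S)) 1) := by
    intro j hj
    by_cases h1 : j - 1 ∈ S
    · simp [h1]
    · simp only [h1, if_false]
      have hj1 : j ≠ 0 := by rintro rfl; exact h1 hj
      rw [map_smul, Uop, Finsupp.linearCombination_single, one_smul]
      have hni : j - 1 ∉ S.erase j := fun h => h1 (Finset.mem_of_mem_erase h)
      rw [ustep, dnS, Finset.sum_insert hni]
      have hs1 : j - 1 + 1 = j := Nat.succ_pred_eq_of_pos (Nat.pos_of_ne_zero hj1)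
      have hmem : j ∉ insert (j-1) (S.erase j) := by
        simp only [Finset.mem_insert, Finset.mem_erase]
        push_neg
        exact ⟨by omega, fun h _ => (h rfl).elim⟩
      rw [hs1]
      simp only [eq_false hmem, if_false]
      have hset : upS (j-1) (insert (j-1) (S.erase j)) = S := by
        rw [upS, hs1, Finset.erase_insert hni, Finset.insert_erase hj]
      rw [hset, smul_add, smul_smul, Finset.smul_sum]
      congr 1
      refine Finset.sum_congr rfl (fun i hi => ?_)
      by_cases h3 : i + 1 ∈ dnS j S
      · rw [dnS] at h3; simp [h3, dnS]
      · rw [dnS] at h3; simp only [h3, if_false, dnS]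
        rw [smul_smul]
  rw [Finset.sum_congr rfl key, Finset.sum_add_distrib, Finset.sum_smul]

lemma coeff_id (n i : ℕ) : fco n i * eco (i+1) - eco i * fco n (i-1) = (n:ℚ) - 1 - 2*i := by
  rcases i with _ | m
  · simp [fco, eco]
  · simp only [fco, eco, Nat.add_sub_cancel]
    push_cast
    ring

lemma diag_eq (n : ℕ) (S : Finset ℕ) :
    (∑ i ∈ S, if i + 1 ∈ S then 0 else fco n i * eco (i+1))
      - (∑ j ∈ S, if j - 1 ∈ S then 0 else eco j * fco n (j-1))
    = ∑ i ∈ S, ((n:ℚ) - 1 - 2*i) := by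
  have e1 : ∀ i ∈ S, (if i + 1 ∈ S then (0:ℚ) else fco n i * eco (i+1))
      = fco n i * eco (i+1) - (if i + 1 ∈ S then fco n i * eco (i+1) else 0) := by
    intro i _; split_ifs <;> ring
  have e2 : ∀ j ∈ S, (if j - 1 ∈ S then (0:ℚ) else eco j * fco n (j-1))
      = eco j * fco n (j-1) - (if j - 1 ∈ S then eco j * fco n (j-1) else 0) := by
    intro j _; split_ifs <;> ring
  have d1 : (∑ i ∈ S, if i + 1 ∈ S then (0:ℚ) else fco n i * eco (i+1))
      = (∑ i ∈ S, fco n i * eco (i+1)) - ∑ i ∈ S, (if i + 1 ∈ S then fco n i * eco (i+1) else 0) := by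
    rw [← Finset.sum_sub_distrib]; exact Finset.sum_congr rfl e1
  have d2 : (∑ j ∈ S, if j - 1 ∈ S then (0:ℚ) else eco j * fco n (j-1))
      = (∑ j ∈ S, eco j * fco n (j-1)) - ∑ j ∈ S, (if j - 1 ∈ S then eco j * fco n (j-1) else 0) := by
    rw [← Finset.sum_sub_distrib]; exact Finset.sum_congr rfl e2
  rw [d1, d2]
  have cross : (∑ i ∈ S, if i + 1 ∈ S then fco n i * eco (i+1) else 0)
      = ∑ j ∈ S, if j - 1 ∈ S then eco j * fco n (j-1) else 0 := by
    have L : ∀ i ∈ S, (if i + 1 ∈ S then fco n i * eco (i+1) else 0)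
        = ∑ j ∈ S, if j = i + 1 then fco n i * eco j else 0 := by
      intro i _
      rw [Finset.sum_ite_eq' S (i+1) (fun j => fco n i * eco j)]
    have R : ∀ j ∈ S, (if j - 1 ∈ S then eco j * fco n (j-1) else 0)
        = ∑ i ∈ S, if j = i + 1 then fco n i * eco j else 0 := by
      intro j _
      rcases j with _ | m
      · simp [eco]
      · have h : ∀ i ∈ S, (if m + 1 = i + 1 then fco n i * eco (m+1) else 0)
            = if i = m then fco n i * eco (m+1) else 0 := by
          intro i _
          rcases eq_or_ne i m with rfl | hne
          · rw [if_pos rfl, if_pos rfl]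
          · rw [if_neg (by omega), if_neg hne]
        rw [Finset.sum_congr rfl h, Finset.sum_ite_eq' S m (fun i => fco n i * eco (m+1))]
        simp only [Nat.add_sub_cancel]
        rw [mul_comm]
    rw [Finset.sum_congr rfl L, Finset.sum_congr rfl R, Finset.sum_comm]
  rw [cross, sub_sub_sub_cancel_right, ← Finset.sum_sub_distrib]
  exact Finset.sum_congr rfl (fun i _ => coeff_id n i)

lemma offdiag_eq (n : ℕ) (S : Finset ℕ) :
    (∑ i ∈ S, ∑ j ∈ S.erase i,
          (if i + 1 ∈ S then 0 else if j - 1 ∈ upS i S then 0 else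
            (fco n i * eco j) • Finsupp.single (dnS j (upS i S)) (1:ℚ)))
    = ∑ j ∈ S, ∑ i ∈ S.erase j,
          (if j - 1 ∈ S then 0 else if i + 1 ∈ dnS j S then 0 else
            (eco j * fco n i) • Finsupp.single (upS i (dnS j S)) (1:ℚ)) := by
  have e1 : ∀ i ∈ S, (∑ j ∈ S.erase i,
        (if i + 1 ∈ S then 0 else if j - 1 ∈ upS i S then 0 else
            (fco n i * eco j) • Finsupp.single (dnS j (upS i S)) (1:ℚ)))
      = ∑ j ∈ S, (if j = i then 0 else if i + 1 ∈ S then 0 else if j - 1 ∈ upS i S then 0 else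
            (fco n i * eco j) • Finsupp.single (dnS j (upS i S)) (1:ℚ)) := by
    intro i _
    have h0 := Finset.sum_erase (f := fun j => if j = i then (0:W) else
        (if i + 1 ∈ S then 0 else if j - 1 ∈ upS i S then 0 else
            (fco n i * eco j) • Finsupp.single (dnS j (upS i S)) (1:ℚ))) S (a := i) (if_pos rfl)
    rw [← h0]
    exact Finset.sum_congr rfl (fun j hj => (if_neg (Finset.ne_of_mem_erase hj)).symm)
  have e2 : ∀ j ∈ S, (∑ i ∈ S.erase j,
        (if j - 1 ∈ S then 0 else if i + 1 ∈ dnS j S then 0 else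
            (eco j * fco n i) • Finsupp.single (upS i (dnS j S)) (1:ℚ)))
      = ∑ i ∈ S, (if i = j then 0 else if j - 1 ∈ S then 0 else if i + 1 ∈ dnS j S then 0 else
            (eco j * fco n i) • Finsupp.single (upS i (dnS j S)) (1:ℚ)) := by
    intro j _
    have h0 := Finset.sum_erase (f := fun i => if i = j then (0:W) else
        (if j - 1 ∈ S then 0 else if i + 1 ∈ dnS j S then 0 else
            (eco j * fco n i) • Finsupp.single (upS i (dnS j S)) (1:ℚ))) S (a := j) (if_pos rfl)
    rw [← h0]
    exact Finset.sum_congr rfl (fun i hi => (if_neg (Finset.ne_of_mem_erase hi)).symm)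
  rw [Finset.sum_congr rfl e1, Finset.sum_congr rfl e2, Finset.sum_comm]
  refine Finset.sum_congr rfl (fun j hj => Finset.sum_congr rfl (fun i hi => ?_))
  -- pointwise equality, i j ∈ S
  by_cases hji : j = i
  · subst hji; simp
  rw [if_neg hji, if_neg (show ¬(i = j) from fun h => hji h.symm)]
  by_cases h2 : i + 1 ∈ S
  · rw [if_pos h2]
    by_cases h3 : j - 1 ∈ S
    · rw [if_pos h3]
    · rw [if_neg h3]
      have hij : i + 1 ≠ j := by
        intro h
        apply h3
        have : j - 1 = i := by omega
        rw [this]; exact hi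
      have : i + 1 ∈ dnS j S := by
        rw [dnS, Finset.mem_insert, Finset.mem_erase]
        exact Or.inr ⟨hij, h2⟩
      rw [if_pos this]
  · rw [if_neg h2]
    by_cases h3 : j - 1 ∈ S
    · rw [if_pos h3]
      have hj1i : j - 1 ≠ i := by
        intro h
        -- then j = i + 1 ∈ S, contradicting h2 (note j ≠ i rules out j = 0)
        have hj0 : j ≠ 0 := by
          intro h0; apply hji; omega
        have : j = i + 1 := by omega
        rw [this] at hj
        exact h2 hj
      have : j - 1 ∈ upS i S := by
        rw [upS, Finset.mem_insert, Finset.mem_erase]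
        exact Or.inr ⟨hj1i, h3⟩
      rw [if_pos this]
    · rw [if_neg h3]
      -- both remaining guards are equivalent to j - 1 = i + 1
      have hji1 : j ≠ i + 1 := by intro h; rw [h] at hj; exact h2 hj
      have hij1 : i ≠ j - 1 := by intro h; rw [h] at hi; exact h3 hi
      have g1 : (j - 1 ∈ upS i S) ↔ (j - 1 = i + 1) := by
        rw [upS, Finset.mem_insert, Finset.mem_erase]
        constructor
        · rintro (h | ⟨_, h⟩)
          · exact h
          · exact absurd h h3
        · exact Or.inl
      have g2 : (i + 1 ∈ dnS j S) ↔ (i + 1 = j - 1) := by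
        rw [dnS, Finset.mem_insert, Finset.mem_erase]
        constructor
        · rintro (h | ⟨_, h⟩)
          · exact h
          · exact absurd h h2
        · exact Or.inl
      by_cases h4 : j - 1 = i + 1
      · rw [if_pos (g1.mpr h4), if_pos (g2.mpr h4.symm)]
      · rw [if_neg (show ¬(j - 1 ∈ upS i S) from fun h => h4 (g1.mp h)), if_neg (show ¬(i + 1 ∈ dnS j S) from fun h => h4 (g2.mp h).symm)]
        rw [mul_comm (eco j) (fco n i)]
        congr 2
        -- set equality
        rw [dnS, upS, dnS, upS,
          Finset.erase_insert_of_ne (fun h : i + 1 = j => hji1 h.symm),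
          Finset.erase_insert_of_ne (Ne.symm hij1),
          Finset.insert_comm, Finset.erase_right_comm]

lemma comm_single (n : ℕ) (S : Finset ℕ) :
    Dop (ustep n S) - Uop n (dstep S) = hstep n S := by
  rw [Dop_ustep, Uop_dstep, ← offdiag_eq, add_sub_add_right_eq_sub, ← sub_smul, diag_eq, hstep]

/-! ### Graded pieces -/

/-- minimal sum of a finset of naturals of given cardinality -/
lemma min_sum : ∀ (m : ℕ) (T : Finset ℕ), T.card = m → ∑ j ∈ Finset.range m, j ≤ ∑ x ∈ T, x := by
  intro m
  induction m with
  | zero => intro T _; simp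
  | succ m ih =>
    intro T hT
    have hne : T.Nonempty := Finset.card_pos.mp (by omega)
    set M := T.max' hne with hM
    have hMem : M ∈ T := T.max'_mem hne
    have hsub : T ⊆ Finset.range (M+1) := by
      intro x hx
      rw [Finset.mem_range]
      have := Finset.le_max' T x hx
      omega
    have hcard : m + 1 ≤ M + 1 := by
      have := Finset.card_le_card hsub
      rw [hT, Finset.card_range] at this
      exact this
    have herase := ih (T.erase M) (by rw [Finset.card_erase_of_mem hMem, hT]; rfl)
    have hsum : ∑ x ∈ T.erase M, x + M = ∑ x ∈ T, x := by
      simpa using Finset.sum_erase_add T (fun x => x) hMem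
    rw [Finset.sum_range_succ]
    omega

/-- the weight-space index sets: subsets of `range (a+b)` of size `b` with given sum -/
def Om (a b k : ℕ) : Finset (Finset ℕ) :=
  (Finset.range (a+b)).powerset.filter
    (fun S => S.card = b ∧ ∑ x ∈ S, x = (∑ j ∈ Finset.range b, j) + k)

lemma mem_Om {a b k : ℕ} {S : Finset ℕ} :
    S ∈ Om a b k ↔ S ⊆ Finset.range (a+b) ∧ S.card = b
      ∧ ∑ x ∈ S, x = (∑ j ∈ Finset.range b, j) + k := by
  simp [Om, and_assoc]

/-- support of `ustep` raises the grade by one -/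
lemma supp_ustep {a b k : ℕ} {S : Finset ℕ} (hS : S ∈ Om a b k) :
    ∀ T ∈ (ustep (a+b) S).support, T ∈ Om a b (k+1) := by
  intro T hT
  obtain ⟨hsub, hcard, hsum⟩ := mem_Om.mp hS
  have := Finsupp.support_finset_sum hT
  rw [Finset.mem_biUnion] at this
  obtain ⟨i, hi, hTi⟩ := this
  rw [Finsupp.mem_support_iff] at hTi
  by_cases h1 : i + 1 ∈ S
  · rw [if_pos h1] at hTi; simp at hTi
  rw [if_neg h1] at hTi
  have hin : i < a + b := Finset.mem_range.mp (hsub hi)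
  have hco : fco (a+b) i ≠ 0 ∧ T = upS i S := by
    by_cases hfz : fco (a+b) i = 0
    · rw [hfz, zero_smul] at hTi; simp at hTi
    · refine ⟨hfz, ?_⟩
      rw [Finsupp.smul_single] at hTi
      by_cases hUT : T = upS i S
      · exact hUT
      · rw [Finsupp.single_apply, if_neg (fun h => hUT h.symm)] at hTi
        simp at hTi
  obtain ⟨hfz, rfl⟩ := hco
  have hia : i + 1 < a + b := by
    rcases Nat.lt_or_ge (i+1) (a+b) with h | h
    · exact h
    · exfalso
      apply hfz
      have : i = a + b - 1 := by omega
      rw [fco, this]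
      have hab : 1 ≤ a + b := by omega
      push_cast [Nat.cast_sub hab]
      ring
  have hi1e : i + 1 ∉ S.erase i := fun h => h1 (Finset.mem_of_mem_erase h)
  have hbpos : 0 < b := by
    rcases Nat.eq_zero_or_pos b with h | h
    · exfalso; rw [h] at hcard; exact Finset.notMem_empty i (Finset.card_eq_zero.mp hcard ▸ hi)
    · exact h
  rw [mem_Om, upS]
  refine ⟨?_, ?_, ?_⟩
  · intro x hx
    rw [Finset.mem_insert] at hx
    rcases hx with rfl | hx
    · exact Finset.mem_range.mpr hia
    · exact hsub (Finset.mem_of_mem_erase hx)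
  · rw [Finset.card_insert_of_notMem hi1e, Finset.card_erase_of_mem hi, hcard]
    omega
  · rw [Finset.sum_insert hi1e]
    have h9 : ∑ x ∈ S.erase i, x + i = ∑ x ∈ S, x := by
      simpa using Finset.sum_erase_add S (fun x => x) hi
    omega

/-- support of `dstep` lowers the grade by one -/
lemma supp_dstep {a b k : ℕ} {S : Finset ℕ} (hS : S ∈ Om a b (k+1)) :
    ∀ T ∈ (dstep S).support, T ∈ Om a b k := by
  intro T hT
  obtain ⟨hsub, hcard, hsum⟩ := mem_Om.mp hS
  have := Finsupp.support_finset_sum hT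
  rw [Finset.mem_biUnion] at this
  obtain ⟨i, hi, hTi⟩ := this
  rw [Finsupp.mem_support_iff] at hTi
  by_cases h1 : i - 1 ∈ S
  · rw [if_pos h1] at hTi; simp at hTi
  rw [if_neg h1] at hTi
  have hi0 : i ≠ 0 := by rintro rfl; exact h1 hi
  have hin : i < a + b := Finset.mem_range.mp (hsub hi)
  have hUT : T = dnS i S := by
    rw [Finsupp.smul_single] at hTi
    by_cases hUT : T = dnS i S
    · exact hUT
    · rw [Finsupp.single_apply, if_neg (fun h => hUT h.symm)] at hTi
      simp at hTi
  subst hUT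
  have hie : i - 1 ∉ S.erase i := fun h => h1 (Finset.mem_of_mem_erase h)
  rw [mem_Om, dnS]
  refine ⟨?_, ?_, ?_⟩
  · intro x hx
    rw [Finset.mem_insert] at hx
    rcases hx with rfl | hx
    · exact Finset.mem_range.mpr (by omega)
    · exact hsub (Finset.mem_of_mem_erase hx)
  · rw [Finset.card_insert_of_notMem hie, Finset.card_erase_of_mem hi, hcard]
    have : 0 < b := by
      rcases Nat.eq_zero_or_pos b with h | h
      · exfalso; rw [h] at hcard; exact Finset.notMem_empty i (Finset.card_eq_zero.mp hcard ▸ hi)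
      · exact h
    omega
  · rw [Finset.sum_insert hie]
    have h2 : ∑ x ∈ S.erase i, x + i = ∑ x ∈ S, x := by
      simpa using Finset.sum_erase_add S (fun x => x) hi
    omega

/-- at the bottom degree, `dstep` vanishes -/
lemma dstep_bot {a b : ℕ} {S : Finset ℕ} (hS : S ∈ Om a b 0) : dstep S = 0 := by
  obtain ⟨hsub, hcard, hsum⟩ := mem_Om.mp hS
  rw [dstep]
  refine Finset.sum_eq_zero (fun i hi => ?_)
  by_cases h1 : i - 1 ∈ S
  · rw [if_pos h1]
  exfalso
  have hi0 : i ≠ 0 := by rintro rfl; exact h1 hi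
  have hie : i - 1 ∉ S.erase i := fun h => h1 (Finset.mem_of_mem_erase h)
  have hcd : (dnS i S).card = b := by
    rw [dnS, Finset.card_insert_of_notMem hie, Finset.card_erase_of_mem hi, hcard]
    have : 0 < b := by
      rcases Nat.eq_zero_or_pos b with h | h
      · exfalso; rw [h] at hcard; exact Finset.notMem_empty i (Finset.card_eq_zero.mp hcard ▸ hi)
      · exact h
    omega
  have h3 := min_sum b (dnS i S) hcd
  rw [dnS, Finset.sum_insert hie] at h3
  have h2 : ∑ x ∈ S.erase i, x + i = ∑ x ∈ S, x := by
    simpa using Finset.sum_erase_add S (fun x => x) hi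
  omega

/-- the weight of a basis vector in `Om a b k` is `a*b - 2*k` -/
lemma hstep_const {a b k : ℕ} {S : Finset ℕ} (hS : S ∈ Om a b k) :
    hstep (a+b) S = ((a*b : ℚ) - 2*k) • Finsupp.single S (1:ℚ) := by
  obtain ⟨hsub, hcard, hsum⟩ := mem_Om.mp hS
  rw [hstep]
  congr 1
  have h1 : (∑ i ∈ S, (((a+b:ℕ):ℚ) - 1 - 2*(i:ℚ)))
      = S.card * (((a+b:ℕ):ℚ) - 1) - 2 * ((∑ x ∈ S, x : ℕ) : ℚ) := by
    push_cast
    rw [Finset.sum_sub_distrib, Finset.sum_const, Finset.mul_sum]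
    simp [nsmul_eq_mul]
  rw [h1, hcard, hsum]
  rcases Nat.eq_zero_or_pos b with hb | hb
  · subst hb; simp
  have h2 : (∑ j ∈ Finset.range b, (j:ℚ)) * 2 = (b:ℚ) * ((b:ℚ) - 1) := by
    have h3 := Finset.sum_range_id_mul_two b
    have h4 : ((∑ j ∈ Finset.range b, j : ℕ) : ℚ) * 2 = ((b * (b-1) : ℕ):ℚ) := by
      exact_mod_cast congrArg (Nat.cast : ℕ → ℚ) h3
    rw [Nat.cast_sum] at h4
    rw [h4]
    push_cast [Nat.cast_sub hb]
    ring
  push_cast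
  linarith [h2]

/-! ### Restricted operators between weight spaces -/

abbrev Vk (a b k : ℕ) : Type := {S // S ∈ Om a b k} →₀ ℚ

def incl (a b k : ℕ) : Vk a b k →ₗ[ℚ] W :=
  Finsupp.lmapDomain ℚ ℚ (Subtype.val : {S // S ∈ Om a b k} → Finset ℕ)

def proj (a b k : ℕ) : W →ₗ[ℚ] Vk a b k :=
  Finsupp.lcomapDomain (Subtype.val : {S // S ∈ Om a b k} → Finset ℕ) Subtype.val_injective

lemma proj_incl (a b k : ℕ) (x : Vk a b k) : proj a b k (incl a b k x) = x := by
  ext z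
  show Finsupp.comapDomain _ (Finsupp.mapDomain _ x) _ z = x z
  exact Finsupp.mapDomain_apply Subtype.val_injective x z

lemma incl_proj {a b k : ℕ} (x : W) (h : ∀ T ∈ x.support, T ∈ Om a b k) :
    incl a b k (proj a b k x) = x := by
  show Finsupp.mapDomain _ (Finsupp.comapDomain _ x _) = x
  refine Finsupp.mapDomain_comapDomain _ Subtype.val_injective x ?_
  intro T hT
  rw [Subtype.range_coe_subtype]
  exact h T (by simpa using hT)

lemma incl_single (a b k : ℕ) (z : {S // S ∈ Om a b k}) :
    incl a b k (Finsupp.single z 1) = Finsupp.single (z : Finset ℕ) (1:ℚ) := by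
  rw [incl, Finsupp.lmapDomain_apply, Finsupp.mapDomain_single]

def Ek (a b k : ℕ) : Vk a b k →ₗ[ℚ] Vk a b (k+1) :=
  (proj a b (k+1)).comp ((Uop (a+b)).comp (incl a b k))

def Fk (a b k : ℕ) : Vk a b (k+1) →ₗ[ℚ] Vk a b k :=
  (proj a b k).comp (Dop.comp (incl a b (k+1)))

lemma Uop_fix (a b k : ℕ) (x : Vk a b k) :
    incl a b (k+1) (proj a b (k+1) (Uop (a+b) (incl a b k x))) = Uop (a+b) (incl a b k x) := by
  have : ((incl a b (k+1)).comp ((proj a b (k+1)).comp ((Uop (a+b)).comp (incl a b k))))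
      = (Uop (a+b)).comp (incl a b k) := by
    apply Finsupp.lhom_ext
    intro z q
    have hq : (Finsupp.single z q : Vk a b k) = q • Finsupp.single z 1 := by
      rw [Finsupp.smul_single, smul_eq_mul, mul_one]
    rw [hq, map_smul, map_smul]
    congr 1
    simp only [LinearMap.comp_apply, incl_single]
    rw [Uop, Finsupp.linearCombination_single, one_smul]
    exact incl_proj _ (fun T hT => supp_ustep z.2 T hT)
  exact congrFun (congrArg (fun f => f.toFun) this) x

lemma Dop_fix (a b k : ℕ) (x : Vk a b (k+1)) :
    incl a b k (proj a b k (Dop (incl a b (k+1) x))) = Dop (incl a b (k+1) x) := by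
  have : ((incl a b k).comp ((proj a b k).comp (Dop.comp (incl a b (k+1)))))
      = Dop.comp (incl a b (k+1)) := by
    apply Finsupp.lhom_ext
    intro z q
    have hq : (Finsupp.single z q : Vk a b (k+1)) = q • Finsupp.single z 1 := by
      rw [Finsupp.smul_single, smul_eq_mul, mul_one]
    rw [hq, map_smul, map_smul]
    congr 1
    simp only [LinearMap.comp_apply, incl_single]
    rw [Dop, Finsupp.linearCombination_single, one_smul]
    exact incl_proj _ (fun T hT => supp_dstep z.2 T hT)
  exact congrFun (congrArg (fun f => f.toFun) this) x

lemma Dop_bot (a b : ℕ) (x : Vk a b 0) : Dop (incl a b 0 x) = 0 := by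
  have : Dop.comp (incl a b 0) = (0 : Vk a b 0 →ₗ[ℚ] W) := by
    apply Finsupp.lhom_ext
    intro z q
    have hq : (Finsupp.single z q : Vk a b 0) = q • Finsupp.single z 1 := by
      rw [Finsupp.smul_single, smul_eq_mul, mul_one]
    rw [hq, map_smul, map_smul]
    simp only [LinearMap.comp_apply, incl_single]
    rw [Dop, Finsupp.linearCombination_single, one_smul, dstep_bot z.2]
    simp
  exact congrFun (congrArg (fun f => f.toFun) this) x

/-- the global commutator -/
lemma comm_apply (n : ℕ) (y : W) : Dop (Uop n y) - Uop n (Dop y) = Hop n y := by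
  have : (Dop.comp (Uop n) - (Uop n).comp Dop) = Hop n := by
    apply Finsupp.lhom_ext
    intro S q
    have hq : (Finsupp.single S q : W) = q • Finsupp.single S 1 := by
      rw [Finsupp.smul_single, smul_eq_mul, mul_one]
    rw [hq, map_smul, map_smul]
    congr 1
    simp only [LinearMap.sub_apply, LinearMap.comp_apply]
    rw [Uop, Dop, Hop, Finsupp.linearCombination_single, Finsupp.linearCombination_single,
      Finsupp.linearCombination_single, one_smul, one_smul, one_smul]
    exact comm_single n S
  have h2 := congrFun (congrArg (fun f => f.toFun) this) y
  simpa using h2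

lemma Hop_incl (a b k : ℕ) (x : Vk a b k) :
    Hop (a+b) (incl a b k x) = ((a*b : ℚ) - 2*k) • incl a b k x := by
  have : (Hop (a+b)).comp (incl a b k)
      = ((a*b : ℚ) - 2*k) • (incl a b k) := by
    apply Finsupp.lhom_ext
    intro z q
    have hq : (Finsupp.single z q : Vk a b k) = q • Finsupp.single z 1 := by
      rw [Finsupp.smul_single, smul_eq_mul, mul_one]
    rw [hq, map_smul, map_smul]
    congr 1
    simp only [LinearMap.comp_apply, LinearMap.smul_apply, incl_single]
    rw [Hop, Finsupp.linearCombination_single, one_smul]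
    exact hstep_const z.2
  exact congrFun (congrArg (fun f => f.toFun) this) x

lemma rel_zero (a b : ℕ) (x : Vk a b 0) :
    Fk a b 0 (Ek a b 0 x) = ((a*b : ℚ)) • x := by
  have h1 : Fk a b 0 (Ek a b 0 x)
      = proj a b 0 (Dop (Uop (a+b) (incl a b 0 x))) := by
    rw [Fk, Ek]
    simp only [LinearMap.comp_apply]
    rw [Uop_fix]
  rw [h1]
  have h2 := comm_apply (a+b) (incl a b 0 x)
  rw [Dop_bot, map_zero, sub_zero, Hop_incl] at h2
  rw [h2, map_smul, proj_incl]
  norm_num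

lemma rel_succ (a b k : ℕ) (x : Vk a b (k+1)) :
    Fk a b (k+1) (Ek a b (k+1) x)
      = Ek a b k (Fk a b k x) + ((a*b : ℚ) - 2*(k+1)) • x := by
  have h1 : Fk a b (k+1) (Ek a b (k+1) x)
      = proj a b (k+1) (Dop (Uop (a+b) (incl a b (k+1) x))) := by
    rw [Fk, Ek]
    simp only [LinearMap.comp_apply]
    rw [Uop_fix]
  have h2 : Ek a b k (Fk a b k x)
      = proj a b (k+1) (Uop (a+b) (Dop (incl a b (k+1) x))) := by
    rw [Ek, Fk]
    simp only [LinearMap.comp_apply]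
    rw [Dop_fix]
  have h3 := comm_apply (a+b) (incl a b (k+1) x)
  rw [Hop_incl] at h3
  have h4 : Dop (Uop (a+b) (incl a b (k+1) x))
      = Uop (a+b) (Dop (incl a b (k+1) x)) + ((a*b:ℚ) - 2*(k+1)) • incl a b (k+1) x := by
    push_cast at h3 ⊢
    linear_combination (norm := module) h3
  rw [h1, h4, map_add, map_smul, proj_incl, h2]

/-- the abstract sl₂ positivity argument -/
lemma sl2_inj (a b : ℕ) :
    ∀ k, 2*k < a*b → ∀ (t : ℚ), t ≤ 0 → ∀ x : Vk a b k,
      Fk a b k (Ek a b k x) = t • x → x = 0 := by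
  intro k
  induction k with
  | zero =>
    intro hN t ht x hx
    rw [rel_zero] at hx
    have : ((a*b : ℚ) - t) • x = 0 := by
      rw [sub_smul, hx, sub_self]
    have hne : ((a*b : ℚ) - t) ≠ 0 := by
      have : (0:ℚ) < (a*b : ℕ) := by exact_mod_cast Nat.pos_of_ne_zero (by omega)
      push_cast at this ⊢
      intro h; nlinarith
    exact (smul_eq_zero.mp this).resolve_left hne
  | succ k ih =>
    intro hN t ht x hx
    rw [rel_succ] at hx
    have hs : Ek a b k (Fk a b k x) = (t - ((a*b:ℚ) - 2*(k+1))) • x := by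
      rw [sub_smul, ← hx]; abel
    set s : ℚ := t - ((a*b:ℚ) - 2*(k+1)) with hsdef
    have hs0 : s < 0 := by
      have hlt : (2*(k+1) : ℚ) < (a*b : ℕ) := by
        exact_mod_cast (by push_cast; exact_mod_cast Nat.cast_lt.mpr hN : ((2*(k+1):ℕ):ℚ) < ((a*b:ℕ):ℚ))
      push_cast at hlt ⊢
      linarith
    have h2 : Fk a b k (Ek a b k (Fk a b k x)) = s • (Fk a b k x) := by
      rw [hs, map_smul]
    have h3 : Fk a b k x = 0 := ih (by omega) s hs0.le _ h2
    rw [h3, map_zero] at hs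
    have := hs.symm
    rw [smul_eq_zero] at this
    exact this.resolve_left (ne_of_lt hs0)

lemma Ek_inj (a b k : ℕ) (hk : 2*k < a*b) : Function.Injective (Ek a b k) := by
  rw [injective_iff_map_eq_zero]
  intro x hx
  refine sl2_inj a b k hk 0 le_rfl x ?_
  rw [hx, map_zero, zero_smul]

lemma card_Om_le (a b k : ℕ) (hk : 2*k < a*b) :
    (Om a b k).card ≤ (Om a b (k+1)).card := by
  have h1 := LinearMap.finrank_le_finrank_of_injective (Ek_inj a b k hk)
  rwa [Module.finrank_finsupp_self, Module.finrank_finsupp_self,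
    Fintype.card_coe, Fintype.card_coe] at h1

/-! ### List lemmas for the bijection -/

lemma getD_map_range (G : ℕ → ℕ) (b j : ℕ) (hj : j < b) :
    ((List.range b).map G).getD j 0 = G j := by
  rw [List.getD_eq_getElem _ _ (by simpa using hj)]
  simp

lemma map_range_getD : ∀ (L : List ℕ) (b : ℕ), L.length ≤ b →
    (List.range b).map (fun j => L.getD j 0) = L ++ List.replicate (b - L.length) 0 := by
  intro L
  induction L with
  | nil =>
    intro b _
    simp [List.map_const']
  | cons x L ih =>
    intro b hb
    rcases b with _ | b'
    · simp at hb
    · rw [List.range_succ_eq_map, List.map_cons, List.map_map]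
      have h1 : ((fun j => (x :: L).getD j 0) ∘ Nat.succ) = (fun j => L.getD j 0) := by
        funext j
        simp [Function.comp, List.getD_cons_succ]
      rw [h1, ih b' (by simpa using hb)]
      simp [List.getD_cons_zero, List.length_cons]

lemma getD_anti {M : List ℕ} (h : M.Pairwise (· ≥ ·)) {i j : ℕ} (hij : i ≤ j) :
    M.getD j 0 ≤ M.getD i 0 := by
  rcases Nat.lt_or_ge j M.length with hj | hj
  · have hi : i < M.length := lt_of_le_of_lt hij hj
    rw [List.getD_eq_getElem _ _ hj, List.getD_eq_getElem _ _ hi]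
    rcases Nat.eq_or_lt_of_le hij with rfl | hlt
    · exact le_refl _
    · have := List.Pairwise.rel_get_of_lt h (a := ⟨i, hi⟩) (b := ⟨j, hj⟩) hlt
      simpa [List.get_eq_getElem] using this
  · rw [List.getD_eq_default _ _ hj]
    exact Nat.zero_le _

lemma getD_strict {M : List ℕ} (h : M.Pairwise (· ≥ ·)) (hnd : M.Nodup) {i j : ℕ}
    (hij : i < j) (hj : j < M.length) : M.getD j 0 < M.getD i 0 := by
  have hi : i < M.length := lt_trans hij hj
  have hle : M.getD j 0 ≤ M.getD i 0 := getD_anti h hij.le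
  rcases Nat.eq_or_lt_of_le hle with heq | hlt
  · exfalso
    rw [List.getD_eq_getElem _ _ hj, List.getD_eq_getElem _ _ hi] at heq
    have := (hnd.get_inj_iff (i := ⟨j, hj⟩) (j := ⟨i, hi⟩)).mp (by simpa [List.get_eq_getElem] using heq)
    simp at this
    omega
  · exact hlt

lemma getD_chain {M : List ℕ} (h : M.Pairwise (· ≥ ·)) (hnd : M.Nodup) :
    ∀ (d j : ℕ), j + d < M.length → M.getD (j+d) 0 + d ≤ M.getD j 0 := by
  intro d
  induction d with
  | zero => intro j _; simp
  | succ d ih =>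
    intro j hjd
    have h1 : M.getD (j+d+1) 0 < M.getD (j+d) 0 :=
      getD_strict h hnd (by omega) (by omega)
    have h2 := ih j (by omega)
    have h3 : M.getD (j + (d+1)) 0 = M.getD (j + d + 1) 0 := rfl
    omega

lemma allzero_getD {M : List ℕ} (h : ∀ x ∈ M, x = 0) (j : ℕ) : M.getD j 0 = 0 := by
  rcases Nat.lt_or_ge j M.length with hj | hj
  · rw [List.getD_eq_getElem _ _ hj]
    exact h _ (List.getElem_mem hj)
  · exact List.getD_eq_default _ _ hj

lemma filter_getD : ∀ (M : List ℕ), M.Pairwise (· ≥ ·) → ∀ (j : ℕ),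
    (M.filter (fun x => decide (x ≠ 0))).getD j 0 = M.getD j 0 := by
  intro M
  induction M with
  | nil => intro _ j; rfl
  | cons x M ih =>
    intro hs j
    rw [List.pairwise_cons] at hs
    obtain ⟨hx, hs⟩ := hs
    by_cases hx0 : x = 0
    · subst hx0
      have hall : ∀ y ∈ M, y = 0 := fun y hy => Nat.le_zero.mp (hx y hy)
      have hfilt : (0 :: M).filter (fun x => decide (x ≠ 0)) = [] := by
        rw [List.filter_eq_nil_iff]
        intro y hy
        rcases List.mem_cons.mp hy with rfl | hy
        · simp
        · simp [hall y hy]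
      rw [hfilt]
      have : (0 : ℕ) :: M = List.replicate (M.length + 1) 0 ++ [] := by
        simp [List.replicate_succ]
        exact (List.eq_replicate_of_mem (fun y hy => hall y hy))
      rcases j with _ | j'
      · simp
      · rw [List.getD_cons_succ, allzero_getD hall]
        rfl
    · have hfilt : (x :: M).filter (fun y => decide (y ≠ 0)) =
          x :: (M.filter (fun y => decide (y ≠ 0))) := by
        rw [List.filter_cons_of_pos (by simpa using hx0)]
      rw [hfilt]
      rcases j with _ | j'
      · simp
      · rw [List.getD_cons_succ, List.getD_cons_succ]
        exact ih hs j'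

lemma sorted_map_range {G : ℕ → ℕ} {b : ℕ}
    (h : ∀ i j, i < j → j < b → G j ≤ G i) : ((List.range b).map G).Pairwise (· ≥ ·) := by
  rw [List.pairwise_iff_get]
  intro i j hij
  have hlen : ((List.range b).map G).length = b := by simp
  have hi : (i : ℕ) < b := by have := i.isLt; simpa using this
  have hj : (j : ℕ) < b := by have := j.isLt; simpa using this
  simp only [List.get_eq_getElem, List.getElem_map, List.getElem_range]
  exact h _ _ hij hj

/-! ### The bijection between partitions in a box and the subset model -/

open OPAC

lemma sortedParts_sorted {r : ℕ} (l : Nat.Partition r) : (sortedParts l).Pairwise (· ≥ ·) :=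
  Multiset.pairwise_sort _ _

lemma sortedParts_length {r : ℕ} (l : Nat.Partition r) :
    (sortedParts l).length = Multiset.card l.parts := Multiset.length_sort _

lemma mem_sortedParts {r : ℕ} {l : Nat.Partition r} {x : ℕ} :
    x ∈ sortedParts l ↔ x ∈ l.parts := Multiset.mem_sort _

lemma coe_sortedParts {r : ℕ} (l : Nat.Partition r) :
    (↑(sortedParts l) : Multiset ℕ) = l.parts := Multiset.sort_eq _ _

lemma partK_le {r a : ℕ} {l : Nat.Partition r} (hA : ∀ p ∈ l.parts, p ≤ a) (j : ℕ) :
    partK l j ≤ a := by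
  rw [partK]
  rcases Nat.lt_or_ge j (sortedParts l).length with hj | hj
  · refine hA _ (mem_sortedParts.mp ?_)
    rw [List.getD_eq_getElem _ _ hj]
    exact List.getElem_mem hj
  · rw [List.getD_eq_default _ _ hj]
    exact Nat.zero_le _

lemma partK_anti {r : ℕ} (l : Nat.Partition r) {i j : ℕ} (hij : i ≤ j) :
    partK l j ≤ partK l i :=
  getD_anti (sortedParts_sorted l) hij

def phi (b r : ℕ) (l : Nat.Partition r) : Finset ℕ :=
  (Finset.range b).image (fun j => partK l j + (b - 1 - j))

lemma phi_anti {r b : ℕ} (l : Nat.Partition r) {i j : ℕ} (hij : i < j) (hj : j < b) :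
    partK l j + (b - 1 - j) < partK l i + (b - 1 - i) := by
  have h := partK_anti l hij.le
  omega

lemma phi_injOn {r b : ℕ} (l : Nat.Partition r) :
    Set.InjOn (fun j => partK l j + (b - 1 - j)) ↑(Finset.range b) := by
  intro i hi j hj hij
  simp only [Finset.coe_range, Set.mem_Iio] at hi hj
  by_contra hne
  rcases Nat.lt_or_ge i j with h | h
  · exact absurd hij (Nat.ne_of_gt (phi_anti l h hj))
  · have h2 : j < i := by omega
    exact absurd hij (Nat.ne_of_lt (phi_anti l h2 hi))

lemma phi_mem {a b r : ℕ} {l : Nat.Partition r}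
    (hA : ∀ p ∈ l.parts, p ≤ a) (hB : Multiset.card l.parts ≤ b) :
    phi b r l ∈ Om a b r := by
  rw [mem_Om, phi]
  have hlen : (sortedParts l).length ≤ b := by rw [sortedParts_length]; exact hB
  refine ⟨?_, ?_, ?_⟩
  · intro x hx
    rw [Finset.mem_image] at hx
    obtain ⟨j, hj, rfl⟩ := hx
    rw [Finset.mem_range] at hj
    rw [Finset.mem_range]
    have := partK_le hA j
    omega
  · rw [Finset.card_image_of_injOn (phi_injOn l), Finset.card_range]
  · rw [Finset.sum_image (fun x hx y hy h => phi_injOn l (by simpa using hx) (by simpa using hy) h),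
      Finset.sum_add_distrib]
    have h1 : ∑ j ∈ Finset.range b, partK l j = r := by
      have := OPAC.sum_range_getD (sortedParts l) b hlen
      rw [sum_sortedParts] at this
      exact this
    have h2 : ∑ j ∈ Finset.range b, (b - 1 - j) = ∑ j ∈ Finset.range b, j :=
      Finset.sum_range_reflect (fun j => j) b
    omega

/-! backward map -/

def LSort (S : Finset ℕ) : List ℕ := Finset.sort S (· ≥ ·)

def psiList (b : ℕ) (S : Finset ℕ) : List ℕ :=
  (List.range b).map (fun j => (LSort S).getD j 0 - (b - 1 - j))

section backward

variable {a b r : ℕ} {S : Finset ℕ}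

lemma LSort_sorted (S : Finset ℕ) : (LSort S).Pairwise (· ≥ ·) := Finset.pairwise_sort _ _
lemma LSort_nodup (S : Finset ℕ) : (LSort S).Nodup := Finset.sort_nodup _ _

lemma LSort_len (hS : S ∈ Om a b r) : (LSort S).length = b := by
  rw [LSort, Finset.length_sort, (mem_Om.mp hS).2.1]

lemma T_lb (hS : S ∈ Om a b r) {j : ℕ} (hj : j < b) :
    b - 1 - j ≤ (LSort S).getD j 0 := by
  have hc := getD_chain (LSort_sorted S) (LSort_nodup S) (b - 1 - j) j
    (by rw [LSort_len hS]; omega)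
  omega

lemma T_chain (hS : S ∈ Om a b r) {i j : ℕ} (hij : i ≤ j) (hj : j < b) :
    (LSort S).getD j 0 + (j - i) ≤ (LSort S).getD i 0 := by
  have hc := getD_chain (LSort_sorted S) (LSort_nodup S) (j - i) i
    (by rw [LSort_len hS]; omega)
  rw [show i + (j - i) = j from by omega] at hc
  exact hc

lemma T_sum (hS : S ∈ Om a b r) :
    ∑ j ∈ Finset.range b, (LSort S).getD j 0 = (∑ j ∈ Finset.range b, j) + r := by
  have h1 := OPAC.sum_range_getD (LSort S) b (le_of_eq (LSort_len hS))
  have h2 : (LSort S).sum = ∑ x ∈ S, x := by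
    have h3 : (↑(LSort S) : Multiset ℕ) = S.val := Finset.sort_eq _ _
    have h4 : ∑ x ∈ S, x = Multiset.sum (Multiset.map (fun x => x) S.val) := rfl
    rw [h4, Multiset.map_id', ← h3, Multiset.sum_coe]
  rw [h1, h2, (mem_Om.mp hS).2.2]

lemma T_ub (hS : S ∈ Om a b r) {j : ℕ} (hj : j < b) :
    (LSort S).getD j 0 + j ≤ a + b - 1 := by
  have h1 := T_chain hS (Nat.zero_le j) hj
  have h0 : (LSort S).getD 0 0 < a + b := by
    have hlen : 0 < (LSort S).length := by rw [LSort_len hS]; omega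
    have hmem : (LSort S).getD 0 0 ∈ LSort S := by
      rw [List.getD_eq_getElem _ _ hlen]; exact List.getElem_mem hlen
    have : (LSort S).getD 0 0 ∈ S := by
      rw [LSort, Finset.mem_sort] at hmem; exact hmem
    exact Finset.mem_range.mp ((mem_Om.mp hS).1 this)
  omega

lemma psiList_getD (hS : S ∈ Om a b r) {j : ℕ} (hj : j < b) :
    (psiList b S).getD j 0 = (LSort S).getD j 0 - (b - 1 - j) := by
  rw [psiList, getD_map_range _ _ _ hj]

lemma psiList_sorted (hS : S ∈ Om a b r) : (psiList b S).Pairwise (· ≥ ·) := by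
  refine sorted_map_range (fun i j hij hj => ?_)
  have h1 := T_chain hS hij.le hj
  have h2 := T_lb hS hj
  omega

lemma psiList_sum (hS : S ∈ Om a b r) : (psiList b S).sum = r := by
  have hlen : (psiList b S).length = b := by simp [psiList]
  have h1 := OPAC.sum_range_getD (psiList b S) b (le_of_eq hlen)
  rw [← h1]
  have h2 : ∀ j ∈ Finset.range b, (psiList b S).getD j 0 + (b - 1 - j)
      = (LSort S).getD j 0 := by
    intro j hj
    rw [Finset.mem_range] at hj
    rw [psiList_getD hS hj]
    have := T_lb hS hj
    omega
  have h3 : (∑ j ∈ Finset.range b, (psiList b S).getD j 0)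
        + ∑ j ∈ Finset.range b, (b - 1 - j)
      = ∑ j ∈ Finset.range b, (LSort S).getD j 0 := by
    rw [← Finset.sum_add_distrib]
    exact Finset.sum_congr rfl h2
  have h4 : ∑ j ∈ Finset.range b, (b - 1 - j) = ∑ j ∈ Finset.range b, j :=
    Finset.sum_range_reflect (fun j => j) b
  have h5 := T_sum hS
  omega

def psi (a b r : ℕ) (S : Finset ℕ) (hS : S ∈ Om a b r) : Nat.Partition r :=
  Nat.Partition.ofSums r ↑(psiList b S) (by rw [Multiset.sum_coe]; exact psiList_sum hS)

lemma psi_parts (hS : S ∈ Om a b r) :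
    (psi a b r S hS).parts = Multiset.filter (· ≠ 0) ↑(psiList b S) := rfl

lemma sortedParts_psi (hS : S ∈ Om a b r) :
    sortedParts (psi a b r S hS) = (psiList b S).filter (fun x => decide (x ≠ 0)) := by
  refine (fun hp h1 h2 => List.Perm.eq_of_pairwise' h1 h2 hp) ?_ (sortedParts_sorted _) ?_
  · rw [← Multiset.coe_eq_coe, coe_sortedParts, psi_parts hS, Multiset.filter_coe]
  · exact List.Pairwise.filter _ (psiList_sorted hS)

lemma partK_psi (hS : S ∈ Om a b r) {j : ℕ} (hj : j < b) :
    partK (psi a b r S hS) j = (LSort S).getD j 0 - (b - 1 - j) := by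
  rw [partK, sortedParts_psi hS, filter_getD _ (psiList_sorted hS), psiList_getD hS hj]

lemma psi_mem (hS : S ∈ Om a b r) :
    (∀ p ∈ (psi a b r S hS).parts, p ≤ a) ∧ Multiset.card (psi a b r S hS).parts ≤ b := by
  constructor
  · intro p hp
    rw [psi_parts hS] at hp
    have hp2 : p ∈ (↑(psiList b S) : Multiset ℕ) := Multiset.mem_of_mem_filter hp
    rw [Multiset.mem_coe, psiList, List.mem_map] at hp2
    obtain ⟨j, hj, rfl⟩ := hp2
    rw [List.mem_range] at hj
    have h1 := T_ub hS hj
    have h2 := T_lb hS hj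
    omega
  · rw [psi_parts hS]
    calc Multiset.card (Multiset.filter (· ≠ 0) ↑(psiList b S))
        ≤ Multiset.card ↑(psiList b S) := Multiset.card_le_card (Multiset.filter_le _ _)
      _ = b := by rw [Multiset.coe_card]; simp [psiList]

lemma phi_psi (hS : S ∈ Om a b r) : phi b r (psi a b r S hS) = S := by
  ext x
  rw [phi, Finset.mem_image]
  constructor
  · rintro ⟨j, hj, rfl⟩
    rw [Finset.mem_range] at hj
    rw [partK_psi hS hj]
    have h2 := T_lb hS hj
    rw [Nat.sub_add_cancel h2]
    have hlen : j < (LSort S).length := by rw [LSort_len hS]; exact hj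
    have hmem : (LSort S).getD j 0 ∈ LSort S := by
      rw [List.getD_eq_getElem _ _ hlen]; exact List.getElem_mem hlen
    rw [LSort, Finset.mem_sort] at hmem
    exact hmem
  · intro hx
    have hmem : x ∈ LSort S := by rw [LSort, Finset.mem_sort]; exact hx
    rw [List.mem_iff_getElem] at hmem
    obtain ⟨j, hjl, hjx⟩ := hmem
    have hj : j < b := by rw [← LSort_len hS]; exact hjl
    refine ⟨j, Finset.mem_range.mpr hj, ?_⟩
    rw [partK_psi hS hj]
    have h2 := T_lb hS hj
    rw [Nat.sub_add_cancel h2, List.getD_eq_getElem _ _ hjl, hjx]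

end backward

/-! forward round trip -/

lemma sort_phi {r b : ℕ} (l : Nat.Partition r) :
    LSort (phi b r l) = (List.range b).map (fun j => partK l j + (b - 1 - j)) := by
  refine (fun hp h1 h2 => List.Perm.eq_of_pairwise' h1 h2 hp) ?_ (LSort_sorted _) ?_
  · rw [← Multiset.coe_eq_coe]
    have h1 : (↑(LSort (phi b r l)) : Multiset ℕ) = (phi b r l).val := Finset.sort_eq _ _
    rw [h1, phi, Finset.image_val_of_injOn (phi_injOn l), Finset.range_val]
    rw [show Multiset.range b = ↑(List.range b) from rfl, Multiset.map_coe]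
  · refine sorted_map_range (fun i j hij hj => (phi_anti l hij hj).le)

lemma psi_phi {a b r : ℕ} (l : Nat.Partition r)
    (hA : ∀ p ∈ l.parts, p ≤ a) (hB : Multiset.card l.parts ≤ b)
    (h : phi b r l ∈ Om a b r) :
    psi a b r (phi b r l) h = l := by
  have hlen : (sortedParts l).length ≤ b := by rw [sortedParts_length]; exact hB
  apply Nat.Partition.ext
  rw [psi_parts]
  have h1 : psiList b (phi b r l) = (List.range b).map (fun j => (sortedParts l).getD j 0) := by
    rw [psiList]
    refine List.map_congr_left (fun j hj => ?_)
    rw [List.mem_range] at hj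
    rw [sort_phi l, getD_map_range _ _ _ hj]
    rw [partK]
    omega
  rw [h1, map_range_getD _ _ hlen, ← Multiset.coe_add, Multiset.filter_add]
  have h2 : Multiset.filter (· ≠ 0) (↑(sortedParts l) : Multiset ℕ) = ↑(sortedParts l) := by
    rw [Multiset.filter_eq_self]
    intro x hx
    rw [Multiset.mem_coe, mem_sortedParts] at hx
    have := l.parts_pos hx
    omega
  have h3 : Multiset.filter (· ≠ 0)
      (↑(List.replicate (b - (sortedParts l).length) 0) : Multiset ℕ) = 0 := by
    rw [Multiset.filter_eq_nil]
    intro x hx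
    rw [Multiset.mem_coe, List.mem_replicate] at hx
    simp [hx.2]
  rw [h2, h3, add_zero, coe_sortedParts]

lemma pRect_eq (a b r : ℕ) : pRect r a b = (Om a b r).card := by
  rw [pRect]
  refine Finset.card_bij' (fun l _ => phi b r l) (fun S hS => psi a b r S hS)
    ?_ ?_ ?_ ?_
  · intro l hl
    rw [Finset.mem_filter] at hl
    exact phi_mem hl.2.1 hl.2.2
  · intro S hS
    rw [Finset.mem_filter]
    exact ⟨Finset.mem_univ _, psi_mem hS⟩
  · intro l hl
    rw [Finset.mem_filter] at hl
    exact psi_phi l hl.2.1 hl.2.2 _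
  · intro S hS
    exact phi_psi hS

end
end U12

open OPAC in
/-- unimodality of Gaussian binomial coefficients -/
theorem stmt12 (a b k : ℕ) (hk : 2 * k ≤ a * b) :
    pRect (k - 1) a b ≤ pRect k a b := by
  rcases k with _ | k'
  · exact le_refl _
  · rw [show k' + 1 - 1 = k' from rfl, U12.pRect_eq a b k', U12.pRect_eq a b (k'+1)]
    exact U12.card_Om_le a b k' (by omega)
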